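/- arXiv:math/0602553 — 2 statements merged into one kernel-verified Lean document; each statement's English description precedes it below -/
import Mathlib

section
/- For N ≥ 2 and m ≥ 1, the degree class group of the graph with two vertices joined by one path of length m and N−1 single edges (i.e. m_1 = m, m_2 = ⋯ = m_N = 1) is cyclic of order 1 + m(N−1): Δ_N(1^m) ≅ ℤ/(1 + m(N−1))ℤ. -/
/-- A multigraph: a set of edges, each with an unordered pair of endpoints. -/
structure Multigraph (V E : Type) where
  ends : E → Sym2 V

namespace Multigraph

variable {V E : Type}

/-- Adjacency via an edge lying in the subset `S`. -/
def Adj (G : Multigraph V E) (S : Set E) (x y : V) : Prop :=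
  x ≠ y ∧ ∃ e ∈ S, G.ends e = s(x, y)

/-- The subgraph with edge set `S` is connected (and spans `V`). -/
def ConnectedOn (G : Multigraph V E) (S : Set E) : Prop :=
  ∀ x y : V, Relation.ReflTransGen (G.Adj S) x y

def Connected (G : Multigraph V E) : Prop := G.ConnectedOn Set.univ

/-- No edge is a loop. -/
def Loopless (G : Multigraph V E) : Prop := ∀ e : E, ¬ (G.ends e).IsDiag

/-- A spanning tree: a minimally connecting spanning set of edges. -/
def IsSpanningTree (G : Multigraph V E) (S : Finset E) : Prop :=
  G.ConnectedOn (S : Set E) ∧ ∀ e ∈ S, ¬ G.ConnectedOn ((S : Set E) \ {e})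

/-- The complexity: the number of spanning trees. -/
noncomputable def complexity (G : Multigraph V E) : ℕ :=
  {S : Finset E | G.IsSpanningTree S}.ncard

/-- Number of edges joining `x` and `y`. -/
noncomputable def edgeCount (G : Multigraph V E) (x y : V) : ℕ :=
  {e : E | G.ends e = s(x, y)}.ncard

/-- The Laplacian-type intersection matrix. -/
noncomputable def lap (G : Multigraph V E) [Fintype V] [DecidableEq V] (i j : V) : ℤ :=
  if i = j then -(∑ u ∈ Finset.univ.erase i, (G.edgeCount i u : ℤ))
  else (G.edgeCount i j : ℤ)

/-- The lattice of multidegrees of twisters: span of the columns of the Laplacian. -/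
noncomputable def lapLattice (G : Multigraph V E) [Fintype V] [DecidableEq V] :
    AddSubgroup (V → ℤ) :=
  AddSubgroup.closure (Set.range fun j => fun i => G.lap i j)

/-- The subgroup of `ℤ^V` of vectors with zero coordinate sum. -/
def zeroSum (V : Type) [Fintype V] : AddSubgroup (V → ℤ) where
  carrier := {z | ∑ v, z v = 0}
  add_mem' := by
    intro a b ha hb
    simp only [Set.mem_setOf_eq] at *
    simp [Finset.sum_add_distrib, ha, hb]
  zero_mem' := by simp
  neg_mem' := by
    intro a ha
    simp only [Set.mem_setOf_eq] at *
    simp [ha]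

/-- The degree class group of a multigraph. -/
noncomputable def DCG (G : Multigraph V E) [Fintype V] [DecidableEq V] : Type :=
  zeroSum V ⧸ (G.lapLattice.addSubgroupOf (zeroSum V))

noncomputable instance (G : Multigraph V E) [Fintype V] [DecidableEq V] :
    AddCommGroup (G.DCG) :=
  QuotientAddGroup.Quotient.addCommGroup _

/-- The class in the DCG of an element of the zero-sum lattice. -/
noncomputable def DCGclass (G : Multigraph V E) [Fintype V] [DecidableEq V]
    (z : zeroSum V) : G.DCG :=
  QuotientAddGroup.mk z

/-- The element `e_x - e_y` of the zero-sum lattice. -/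
def eDiff (V : Type) [Fintype V] [DecidableEq V] (x y : V) : zeroSum V :=
  ⟨fun v => (if v = x then 1 else 0) - (if v = y then 1 else 0), by
    show ∑ v : V, ((if v = x then (1:ℤ) else 0) - (if v = y then 1 else 0)) = 0
    simp [Finset.sum_sub_distrib]⟩

end Multigraph

namespace Multigraph

/-- The `j`-th vertex along the `i`-th path of the generalized theta graph:
`Sum.inl 0 = A` for `j = 0`, the internal vertices for `1 ≤ j ≤ m i - 1`,
and `Sum.inl 1 = B` for `j ≥ m i`. -/
def thetaVert (N : ℕ) (m : Fin N → ℕ) (i : Fin N) (j : ℕ) :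
    Fin 2 ⊕ Σ i : Fin N, Fin (m i - 1) :=
  if _h0 : j = 0 then Sum.inl 0
  else if h : j ≤ m i - 1 then Sum.inr ⟨i, ⟨j - 1, by omega⟩⟩
  else Sum.inl 1

/-- The generalized theta graph `Γ_N(m)`: two vertices `A = Sum.inl 0` and
`B = Sum.inl 1` joined by `N` internally disjoint paths, the `i`-th of length `m i`. -/
def theta (N : ℕ) (m : Fin N → ℕ) :
    Multigraph (Fin 2 ⊕ Σ i : Fin N, Fin (m i - 1)) (Σ i : Fin N, Fin (m i)) :=
  ⟨fun e => s(thetaVert N m e.1 e.2.1, thetaVert N m e.1 (e.2.1 + 1))⟩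

end Multigraph

set_option autoImplicit false

namespace ThetaAux
open Multigraph Finset

variable (N mv : ℕ)

def mfun : Fin N → ℕ := fun i => if i.val = 0 then mv else 1

abbrev Vt := Fin 2 ⊕ Σ i : Fin N, Fin (mfun N mv i - 1)
abbrev Et := Σ i : Fin N, Fin (mfun N mv i)

def Gg : Multigraph (Vt N mv) (Et N mv) := theta N (mfun N mv)

def i0 (hN : 2 ≤ N) : Fin N := ⟨0, by omega⟩

/-- path vertex -/
def P (hN : 2 ≤ N) (j : ℕ) : Vt N mv := thetaVert N (mfun N mv) (i0 N hN) j

lemma mfun_i0 (hN : 2 ≤ N) : mfun N mv (i0 N hN) = mv := rfl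

lemma P_zero (hN : 2 ≤ N) : P N mv hN 0 = Sum.inl 0 := rfl

lemma P_mid (hN : 2 ≤ N) {j : ℕ} (h1 : 1 ≤ j) (h2 : j ≤ mv - 1) :
    P N mv hN j = Sum.inr ⟨i0 N hN, ⟨j - 1, by simp only [mfun_i0]; omega⟩⟩ := by
  unfold P thetaVert
  rw [dif_neg (by omega), dif_pos (by exact h2)]

lemma P_top (hN : 2 ≤ N) {j : ℕ} (h : mv ≤ j) (hmv : 1 ≤ mv) : P N mv hN j = Sum.inl 1 := by
  unfold P thetaVert
  rw [dif_neg (by omega), dif_neg (by show ¬ (j ≤ mv - 1); omega)]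

end ThetaAux
namespace ThetaAux
open Multigraph Finset

variable (N mv : ℕ)

lemma inr_val_zero (i : Fin N) (t : Fin (mfun N mv i - 1)) : i.val = 0 := by
  by_contra h
  have : mfun N mv i = 1 := by simp [mfun, h]
  have := t.isLt
  omega

lemma inr_eq_P (hN : 2 ≤ N) (hmv : 1 ≤ mv) (i : Fin N) (t : Fin (mfun N mv i - 1)) :
    (Sum.inr ⟨i, t⟩ : Vt N mv) = P N mv hN ((t : ℕ) + 1) := by
  have hi : i = i0 N hN := Fin.ext (inr_val_zero N mv i t)
  subst hi
  have ht : (t : ℕ) < mv - 1 := by have := t.isLt; simpa only [mfun_i0] using this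
  rw [P_mid N mv hN (by omega) (by omega)]
  congr 1

def Qidx : Vt N mv → ℕ
  | Sum.inl a => if a = 0 then 0 else mv
  | Sum.inr ⟨_, t⟩ => (t : ℕ) + 1

lemma Qidx_le (hmv : 1 ≤ mv) (v : Vt N mv) : Qidx N mv v ≤ mv := by
  match v with
  | Sum.inl a => by_cases h : a = 0 <;> simp [Qidx, h, hmv]
  | Sum.inr ⟨i, t⟩ =>
    have hi := inr_val_zero N mv i t
    have hi' : mfun N mv i = mv := by simp [mfun, hi]
    have := t.isLt
    simp only [Qidx]
    omega

lemma Qidx_P (hN : 2 ≤ N) (hmv : 1 ≤ mv) {a : ℕ} (ha : a ≤ mv) :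
    Qidx N mv (P N mv hN a) = a := by
  rcases Nat.eq_zero_or_pos a with h0 | h1
  · subst h0; rw [P_zero]; rfl
  · rcases Nat.lt_or_ge a mv with hlt | hge
    · rw [P_mid N mv hN h1 (by omega)]
      simp only [Qidx]
      omega
    · have h : a = mv := by omega
      rw [h, P_top N mv hN le_rfl hmv]
      simp [Qidx, show mv ≠ 0 by omega]

lemma P_Qidx (hN : 2 ≤ N) (hmv : 1 ≤ mv) (v : Vt N mv) :
    P N mv hN (Qidx N mv v) = v := by
  match v with
  | Sum.inl a =>
    match a with
    | 0 => rw [show Qidx N mv (Sum.inl 0) = 0 from rfl, P_zero]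
    | 1 =>
      rw [show Qidx N mv (Sum.inl 1) = mv from rfl, P_top N mv hN le_rfl hmv]
  | Sum.inr ⟨i, t⟩ => exact (inr_eq_P N mv hN hmv i t).symm

lemma P_inj (hN : 2 ≤ N) (hmv : 1 ≤ mv) {a b : ℕ} (ha : a ≤ mv) (hb : b ≤ mv) :
    P N mv hN a = P N mv hN b ↔ a = b := by
  constructor
  · intro h
    have := congrArg (Qidx N mv) h
    rwa [Qidx_P N mv hN hmv ha, Qidx_P N mv hN hmv hb] at this
  · rintro rfl; rfl

lemma P_surj (hN : 2 ≤ N) (hmv : 1 ≤ mv) (v : Vt N mv) :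
    ∃ a, a ≤ mv ∧ v = P N mv hN a :=
  ⟨Qidx N mv v, Qidx_le N mv hmv v, (P_Qidx N mv hN hmv v).symm⟩

end ThetaAux
namespace ThetaAux
open Multigraph Finset

variable (N mv : ℕ)

lemma sum_fin_one {M : Type*} [AddCommMonoid M] {k : ℕ} (hk : k = 1) (g : Fin k → M) :
    ∑ j, g j = g ⟨0, by omega⟩ := by
  subst hk
  simp [Fin.sum_univ_one]

lemma edgeCount_eq_sum (x y : Vt N mv) :
    ((Gg N mv).edgeCount x y : ℤ) =
      ∑ e : Et N mv, (if (Gg N mv).ends e = s(x, y) then (1 : ℤ) else 0) := by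
  rw [edgeCount]
  have h : {e : Et N mv | (Gg N mv).ends e = s(x, y)} =
      ↑(Finset.univ.filter fun e : Et N mv => (Gg N mv).ends e = s(x, y)) := by
    ext e; simp
  rw [h, Set.ncard_coe_finset, Finset.card_filter]
  push_cast
  rfl

lemma sum_Et {M : Type*} [AddCommMonoid M] (hN : 2 ≤ N) (hmv : 1 ≤ mv) (f : Et N mv → M) :
    ∑ e : Et N mv, f e =
      (∑ j : Fin mv, f ⟨i0 N hN, j⟩) +
        ∑ i ∈ Finset.univ.erase (i0 N hN), f ⟨i, ⟨0, by simp only [mfun]; split <;> omega⟩⟩ := by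
  rw [← Finset.univ_sigma_univ, Finset.sum_sigma]
  rw [← Finset.add_sum_erase _ _ (Finset.mem_univ (i0 N hN))]
  congr 1
  refine Finset.sum_congr rfl fun i hi => ?_
  have hi' : i.val ≠ 0 := by
    intro h
    exact (Finset.mem_erase.mp hi).1 (Fin.ext h)
  exact sum_fin_one (by simp [mfun, hi']) _

lemma sum_Vt {M : Type*} [AddCommMonoid M] (hN : 2 ≤ N) (hmv : 1 ≤ mv) (f : Vt N mv → M) :
    ∑ v : Vt N mv, f v =
      f (Sum.inl 0) + f (Sum.inl 1) + ∑ t : Fin (mv - 1), f (Sum.inr ⟨i0 N hN, t⟩) := by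
  rw [Fintype.sum_sum_type, Fin.sum_univ_two]
  congr 1
  rw [← Finset.univ_sigma_univ, Finset.sum_sigma]
  rw [← Finset.add_sum_erase _ _ (Finset.mem_univ (i0 N hN))]
  have h2 : ∑ i ∈ Finset.univ.erase (i0 N hN),
      ∑ t : Fin (mfun N mv i - 1), f (Sum.inr ⟨i, t⟩) = 0 := by
    refine Finset.sum_eq_zero fun i hi => ?_
    have hi' : i.val ≠ 0 := fun h => (Finset.mem_erase.mp hi).1 (Fin.ext h)
    have h1 : mfun N mv i = 1 := by simp [mfun, hi']
    refine Finset.sum_eq_zero fun t _ => ?_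
    exact absurd t.isLt (by omega)
  rw [h2, add_zero]
  rfl

lemma ends_i0 (hN : 2 ≤ N) (j : Fin mv) :
    (Gg N mv).ends ⟨i0 N hN, j⟩ = s(P N mv hN (j : ℕ), P N mv hN ((j : ℕ) + 1)) := rfl

lemma thetaVert_one {i : Fin N} (hi : i.val ≠ 0) :
    thetaVert N (mfun N mv) i 1 = Sum.inl 1 := by
  unfold thetaVert
  rw [dif_neg (by omega), dif_neg (by simp [mfun, hi])]

lemma ends_other (hN : 2 ≤ N) {i : Fin N} (hi : i.val ≠ 0) (j : Fin (mfun N mv i)) :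
    (Gg N mv).ends ⟨i, j⟩ = s(Sum.inl 0, Sum.inl 1) := by
  have hj : (j : ℕ) = 0 := by
    have := j.isLt
    have : mfun N mv i = 1 := by simp [mfun, hi]
    omega
  show s(thetaVert N (mfun N mv) i (j:ℕ), thetaVert N (mfun N mv) i ((j:ℕ) + 1)) = _
  rw [hj]
  rw [show thetaVert N (mfun N mv) i 0 = Sum.inl 0 from rfl, thetaVert_one N mv hi]

end ThetaAux
namespace ThetaAux
open Multigraph Finset

variable (N mv : ℕ)

lemma sum_fin_ind (k c : ℕ) :
    ∑ t : Fin k, (if (t : ℕ) = c then (1 : ℤ) else 0) = if c < k then 1 else 0 := by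
  rcases Nat.lt_or_ge c k with h | h
  · rw [Finset.sum_eq_single_of_mem ⟨c, h⟩ (Finset.mem_univ _)
      (fun b _ hb => if_neg (fun hc => hb (Fin.ext hc)))]
    rw [if_pos rfl, if_pos h]
  · rw [if_neg (by omega)]
    exact Finset.sum_eq_zero fun t _ => if_neg (by have := t.isLt; omega)

lemma EC_P (hN : 2 ≤ N) (hmv : 1 ≤ mv) {a b : ℕ} (ha : a ≤ mv) (hb : b ≤ mv) :
    ((Gg N mv).edgeCount (P N mv hN a) (P N mv hN b) : ℤ) =
      (if a + 1 = b ∨ b + 1 = a then 1 else 0) +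
        (if (a = 0 ∧ b = mv) ∨ (a = mv ∧ b = 0) then (N : ℤ) - 1 else 0) := by
  rw [edgeCount_eq_sum, sum_Et N mv hN hmv]
  have key : ∀ j : Fin mv, ((Gg N mv).ends ⟨i0 N hN, j⟩ = s(P N mv hN a, P N mv hN b)) ↔
      ((((j:ℕ) = a ∧ (j:ℕ) + 1 = b) ∨ ((j:ℕ) = b ∧ (j:ℕ) + 1 = a))) := by
    intro j
    have hj : (j : ℕ) ≤ mv := le_of_lt j.isLt
    have hj1 : (j : ℕ) + 1 ≤ mv := j.isLt
    rw [ends_i0, Sym2.eq_iff, P_inj N mv hN hmv hj ha, P_inj N mv hN hmv hj1 hb,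
      P_inj N mv hN hmv hj hb, P_inj N mv hN hmv hj1 ha]
  have key2 : ∀ i ∈ Finset.univ.erase (i0 N hN),
      (if (Gg N mv).ends (⟨i, ⟨0, by simp only [mfun]; split <;> omega⟩⟩ : Et N mv)
          = s(P N mv hN a, P N mv hN b) then (1:ℤ) else 0) =
      (if (a = 0 ∧ b = mv) ∨ (a = mv ∧ b = 0) then (1:ℤ) else 0) := by
    intro i hi
    have hi' : i.val ≠ 0 := fun h => (Finset.mem_erase.mp hi).1 (Fin.ext h)
    rw [ends_other N mv hN hi']
    have hiff : (s(Sum.inl 0, Sum.inl 1) : Sym2 (Vt N mv)) = s(P N mv hN a, P N mv hN b) ↔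
        ((a = 0 ∧ b = mv) ∨ (a = mv ∧ b = 0)) := by
      rw [show (Sum.inl 0 : Vt N mv) = P N mv hN 0 from rfl,
        show (Sum.inl 1 : Vt N mv) = P N mv hN mv from (P_top N mv hN le_rfl hmv).symm,
        Sym2.eq_iff, P_inj N mv hN hmv (by omega) ha, P_inj N mv hN hmv le_rfl hb,
        P_inj N mv hN hmv (by omega) hb, P_inj N mv hN hmv le_rfl ha]
      omega
    exact if_congr hiff rfl rfl
  rw [Finset.sum_congr rfl key2, Finset.sum_const, Finset.card_erase_of_mem (Finset.mem_univ _),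
    Finset.card_univ, Fintype.card_fin]
  simp only [key]
  have hsum1 : ∑ j : Fin mv, (if (((j:ℕ) = a ∧ (j:ℕ) + 1 = b) ∨ ((j:ℕ) = b ∧ (j:ℕ) + 1 = a))
      then (1:ℤ) else 0) = if a + 1 = b ∨ b + 1 = a then 1 else 0 := by
    by_cases hab : a + 1 = b
    · have e1 : ∀ j : Fin mv, ((((j:ℕ) = a ∧ (j:ℕ) + 1 = b) ∨ ((j:ℕ) = b ∧ (j:ℕ) + 1 = a))
          ↔ (j:ℕ) = a) := fun j => by omega
      simp only [e1]
      rw [sum_fin_ind, if_pos (by omega), if_pos (by omega)]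
    · by_cases hba : b + 1 = a
      · have e1 : ∀ j : Fin mv, ((((j:ℕ) = a ∧ (j:ℕ) + 1 = b) ∨ ((j:ℕ) = b ∧ (j:ℕ) + 1 = a))
            ↔ (j:ℕ) = b) := fun j => by omega
        simp only [e1]
        rw [sum_fin_ind, if_pos (by omega), if_pos (by omega)]
      · rw [if_neg (by omega)]
        exact Finset.sum_eq_zero fun j _ => if_neg (by omega)
  rw [hsum1]
  congr 1
  split_ifs with h
  · rw [nsmul_eq_mul]
    push_cast
    omega
  · simp

end ThetaAux
namespace ThetaAux
open Multigraph Finset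

variable (N mv : ℕ)

lemma deg_P (hN : 2 ≤ N) (hmv : 1 ≤ mv) {b : ℕ} (hb : b ≤ mv) :
    ∑ u : Vt N mv, ((Gg N mv).edgeCount (P N mv hN b) u : ℤ) =
      if b = 0 ∨ b = mv then (N : ℤ) else 2 := by
  rw [sum_Vt N mv hN hmv]
  rw [show (Sum.inl 0 : Vt N mv) = P N mv hN 0 from rfl,
      show (Sum.inl 1 : Vt N mv) = P N mv hN mv from (P_top N mv hN le_rfl hmv).symm]
  rw [EC_P N mv hN hmv hb (by omega), EC_P N mv hN hmv hb le_rfl]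
  have esig : ∀ t : Fin (mv - 1),
      ((Gg N mv).edgeCount (P N mv hN b) (Sum.inr ⟨i0 N hN, t⟩) : ℤ)
      = (if b + 1 = (t : ℕ) + 1 ∨ (t : ℕ) + 1 + 1 = b then 1 else 0) := by
    intro t
    have ht : (t : ℕ) < mv - 1 := by have := t.isLt; simpa only [mfun_i0] using this
    have h2 : ¬((b = 0 ∧ (t : ℕ) + 1 = mv) ∨ (b = mv ∧ (t : ℕ) + 1 = 0)) := by omega
    rw [show (Sum.inr ⟨i0 N hN, t⟩ : Vt N mv) = P N mv hN ((t : ℕ) + 1) from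
        inr_eq_P N mv hN hmv (i0 N hN) t, EC_P N mv hN hmv hb (by omega), if_neg h2, add_zero]
  rw [Finset.sum_congr rfl fun t _ => esig t]
  have e : ∀ t : Fin (mv - 1),
      (if b + 1 = (t : ℕ) + 1 ∨ (t : ℕ) + 1 + 1 = b then (1:ℤ) else 0)
      = (if (t : ℕ) = b then 1 else 0) +
        (if 2 ≤ b then (if (t : ℕ) = b - 2 then (1:ℤ) else 0) else 0) := by
    intro t
    have ht := t.isLt
    by_cases h2 : 2 ≤ b
    · rw [if_pos h2]; split_ifs <;> omega
    · rw [if_neg h2, add_zero]; split_ifs <;> omega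
  rw [Finset.sum_congr rfl fun t _ => e t, Finset.sum_add_distrib, sum_fin_ind (mv-1) b]
  by_cases h2 : 2 ≤ b
  · simp only [if_pos h2]
    rw [sum_fin_ind (mv-1) (b-2)]
    simp only [and_true, true_and, and_false, false_and, or_false, false_or]
    split_ifs <;>
      first
        | omega
        | (simp only [false_or, or_false, true_or, or_true, true_and, and_true, false_and,
            and_false, not_or, not_true, not_false_iff] at *
           omega)
  · simp only [if_neg h2, Finset.sum_const, smul_zero]
    simp only [and_true, true_and, and_false, false_and, or_false, false_or]
    split_ifs <;>
      first
        | omega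
        | (simp only [false_or, or_false, true_or, or_true, true_and, and_true, false_and,
            and_false, not_or, not_true, not_false_iff] at *
           omega)

end ThetaAux
namespace ThetaAux
open Multigraph Finset

variable (N mv : ℕ)

noncomputable def colv (j : Vt N mv) : Vt N mv → ℤ := fun i => (Gg N mv).lap i j

lemma colv_mem (j : Vt N mv) : colv N mv j ∈ (Gg N mv).lapLattice :=
  AddSubgroup.subset_closure ⟨j, rfl⟩

lemma EC_self (hN : 2 ≤ N) (hmv : 1 ≤ mv) {b : ℕ} (hb : b ≤ mv) :
    ((Gg N mv).edgeCount (P N mv hN b) (P N mv hN b) : ℤ) = 0 := by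
  rw [EC_P N mv hN hmv hb hb, if_neg (by omega), if_neg (by omega), add_zero]

lemma lap_P (hN : 2 ≤ N) (hmv : 1 ≤ mv) {a b : ℕ} (ha : a ≤ mv) (hb : b ≤ mv) :
    (Gg N mv).lap (P N mv hN a) (P N mv hN b) =
      if a = b then -(if b = 0 ∨ b = mv then (N : ℤ) else 2)
      else (if a + 1 = b ∨ b + 1 = a then 1 else 0) +
        (if (a = 0 ∧ b = mv) ∨ (a = mv ∧ b = 0) then (N : ℤ) - 1 else 0) := by
  by_cases hab : a = b
  · subst hab
    rw [if_pos rfl, lap, if_pos rfl]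
    rw [Finset.sum_erase_eq_sub (Finset.mem_univ _), deg_P N mv hN hmv ha,
      EC_self N mv hN hmv ha, sub_zero]
  · rw [if_neg hab, lap, if_neg (fun h => hab ((P_inj N mv hN hmv ha hb).mp h)),
      EC_P N mv hN hmv ha hb]

lemma eDiff_val (hN : 2 ≤ N) (hmv : 1 ≤ mv) {a c d : ℕ} (ha : a ≤ mv) (hc : c ≤ mv)
    (hd : d ≤ mv) :
    (eDiff (Vt N mv) (P N mv hN c) (P N mv hN d) : Vt N mv → ℤ) (P N mv hN a) =
      (if a = c then (1:ℤ) else 0) - (if a = d then 1 else 0) := by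
  show (if P N mv hN a = P N mv hN c then (1:ℤ) else 0)
      - (if P N mv hN a = P N mv hN d then 1 else 0) = _
  rw [if_congr (P_inj N mv hN hmv ha hc) rfl rfl, if_congr (P_inj N mv hN hmv ha hd) rfl rfl]

lemma zs_coe (V : Type) [Fintype V] [DecidableEq V] (c : ℤ) (x : zeroSum V) :
    ((c • x : zeroSum V) : V → ℤ) = c • (x : V → ℤ) := rfl

lemma colA (hN : 2 ≤ N) (hmv : 1 ≤ mv) :
    ((((N:ℤ) - 1) • eDiff (Vt N mv) (P N mv hN mv) (P N mv hN 0)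
        + eDiff (Vt N mv) (P N mv hN 1) (P N mv hN 0) : zeroSum (Vt N mv)) : Vt N mv → ℤ)
      = colv N mv (P N mv hN 0) := by
  funext v
  obtain ⟨a, ha, rfl⟩ := P_surj N mv hN hmv v
  simp only [AddSubgroup.coe_add, zs_coe, Pi.add_apply, Pi.smul_apply, smul_eq_mul]
  rw [eDiff_val N mv hN hmv ha le_rfl (by omega), eDiff_val N mv hN hmv ha (by omega) (by omega),
    colv, lap_P N mv hN hmv ha (by omega)]
  try simp only [and_true, true_and, and_false, false_and, or_false, false_or]
  split_ifs <;>
    (try simp only [false_or, or_false, true_or, or_true, true_and, and_true, false_and,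
      and_false, not_or, not_true, not_false_iff] at *) <;>
    (try push_cast) <;> (try ring_nf) <;> omega

lemma colMid (hN : 2 ≤ N) (hmv : 1 ≤ mv) {b : ℕ} (h1 : 1 ≤ b) (h2 : b ≤ mv - 1) :
    ((eDiff (Vt N mv) (P N mv hN (b-1)) (P N mv hN 0)
        + eDiff (Vt N mv) (P N mv hN (b+1)) (P N mv hN 0)
        - (2:ℤ) • eDiff (Vt N mv) (P N mv hN b) (P N mv hN 0) : zeroSum (Vt N mv)) : Vt N mv → ℤ)
      = colv N mv (P N mv hN b) := by
  funext v
  obtain ⟨a, ha, rfl⟩ := P_surj N mv hN hmv v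
  simp only [AddSubgroup.coe_add, AddSubgroup.coe_sub, zs_coe, Pi.add_apply, Pi.sub_apply,
    Pi.smul_apply, smul_eq_mul]
  rw [eDiff_val N mv hN hmv ha (by omega) (by omega), eDiff_val N mv hN hmv ha (by omega) (by omega),
    eDiff_val N mv hN hmv ha (by omega) (by omega),
    colv, lap_P N mv hN hmv ha (by omega)]
  try simp only [and_true, true_and, and_false, false_and, or_false, false_or]
  split_ifs <;>
    (try simp only [false_or, or_false, true_or, or_true, true_and, and_true, false_and,
      and_false, not_or, not_true, not_false_iff] at *) <;>
    (try push_cast) <;> (try ring_nf) <;> omega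

lemma colB (hN : 2 ≤ N) (hmv : 1 ≤ mv) :
    ((eDiff (Vt N mv) (P N mv hN (mv-1)) (P N mv hN 0)
        - (N:ℤ) • eDiff (Vt N mv) (P N mv hN mv) (P N mv hN 0) : zeroSum (Vt N mv)) : Vt N mv → ℤ)
      = colv N mv (P N mv hN mv) := by
  funext v
  obtain ⟨a, ha, rfl⟩ := P_surj N mv hN hmv v
  simp only [AddSubgroup.coe_add, AddSubgroup.coe_sub, zs_coe, Pi.add_apply, Pi.sub_apply,
    Pi.smul_apply, smul_eq_mul]
  rw [eDiff_val N mv hN hmv ha (by omega) (by omega), eDiff_val N mv hN hmv ha le_rfl (by omega),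
    colv, lap_P N mv hN hmv ha le_rfl]
  try simp only [and_true, true_and, and_false, false_and, or_false, false_or]
  split_ifs <;>
    (try simp only [false_or, or_false, true_or, or_true, true_and, and_true, false_and,
      and_false, not_or, not_true, not_false_iff] at *) <;>
    (try push_cast) <;> (try ring_nf) <;> omega

end ThetaAux
namespace ThetaAux
open Multigraph Finset

variable (N mv : ℕ)

def wv : Vt N mv → ℤ
  | Sum.inl a => if a = 0 then 0 else (mv : ℤ)
  | Sum.inr ⟨_, t⟩ => (t : ℕ) + 1

lemma wv_P (hN : 2 ≤ N) (hmv : 1 ≤ mv) {a : ℕ} (ha : a ≤ mv) :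
    wv N mv (P N mv hN a) = (a : ℤ) := by
  rcases Nat.eq_zero_or_pos a with h0 | h1
  · subst h0; rw [P_zero]; simp [wv]
  · rcases Nat.lt_or_ge a mv with hlt | hge
    · rw [P_mid N mv hN h1 (by omega)]
      show ((a - 1 : ℕ) : ℤ) + 1 = (a : ℤ)
      push_cast [Nat.cast_sub h1]
      ring
    · have h : a = mv := by omega
      rw [h, P_top N mv hN le_rfl hmv]
      simp [wv]

noncomputable def raw : (Vt N mv → ℤ) →+ ℤ :=
  AddMonoidHom.mk' (fun z => ∑ v, wv N mv v * z v)
    (by intro a b; simp [mul_add, Finset.sum_add_distrib])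

lemma raw_eDiff (x y : Vt N mv) :
    raw N mv (eDiff (Vt N mv) x y : Vt N mv → ℤ) = wv N mv x - wv N mv y := by
  show ∑ v, wv N mv v * ((if v = x then (1:ℤ) else 0) - (if v = y then 1 else 0)) = _
  simp [mul_sub, Finset.sum_sub_distrib, mul_ite, mul_one, mul_zero, Finset.sum_ite_eq']

end ThetaAux

namespace ThetaAux
open Multigraph Finset

variable (N mv : ℕ)

lemma cast_nself_zero (n' : ℕ) : (((n' : ℤ)) : ZMod n') = 0 := by
  exact_mod_cast ZMod.natCast_self n'

lemma phi_col (hN : 2 ≤ N) (hmv : 1 ≤ mv) (n' : ℕ)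
    (hn' : (n' : ℤ) = 1 + (mv : ℤ) * ((N : ℤ) - 1)) (j : Vt N mv) :
    ((Int.castAddHom (ZMod n')).comp (raw N mv)) (colv N mv j) = 0 := by
  obtain ⟨b, hb, rfl⟩ := P_surj N mv hN hmv j
  rw [AddMonoidHom.comp_apply]
  by_cases hb0 : b = 0
  · subst hb0
    rw [← colA N mv hN hmv]
    have hco : ((((N:ℤ) - 1) • eDiff (Vt N mv) (P N mv hN mv) (P N mv hN 0)
        + eDiff (Vt N mv) (P N mv hN 1) (P N mv hN 0) : zeroSum (Vt N mv)) : Vt N mv → ℤ)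
        = ((N:ℤ) - 1) • (eDiff (Vt N mv) (P N mv hN mv) (P N mv hN 0) : Vt N mv → ℤ)
          + (eDiff (Vt N mv) (P N mv hN 1) (P N mv hN 0) : Vt N mv → ℤ) := by
      simp [AddSubgroup.coe_add, zs_coe]
    rw [hco, map_add, map_zsmul, raw_eDiff, raw_eDiff,
      wv_P N mv hN hmv le_rfl, wv_P N mv hN hmv (by omega : (0:ℕ) ≤ mv),
      wv_P N mv hN hmv (by omega : (1:ℕ) ≤ mv)]
    have : ((N:ℤ) - 1) • ((mv:ℤ) - ((0:ℕ):ℤ)) + (((1:ℕ):ℤ) - ((0:ℕ):ℤ)) = (n' : ℤ) := by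
      rw [hn']; simp only [smul_eq_mul]; push_cast; ring
    rw [this]
    simp [Int.coe_castAddHom, cast_nself_zero]
  · by_cases hbm : b = mv
    · rw [hbm, ← colB N mv hN hmv]
      have hco : ((eDiff (Vt N mv) (P N mv hN (mv-1)) (P N mv hN 0)
          - (N:ℤ) • eDiff (Vt N mv) (P N mv hN mv) (P N mv hN 0) : zeroSum (Vt N mv)) : Vt N mv → ℤ)
          = (eDiff (Vt N mv) (P N mv hN (mv-1)) (P N mv hN 0) : Vt N mv → ℤ)
            - (N:ℤ) • (eDiff (Vt N mv) (P N mv hN mv) (P N mv hN 0) : Vt N mv → ℤ) := by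
        simp [AddSubgroup.coe_sub, zs_coe]
      rw [hco, map_sub, map_zsmul, raw_eDiff, raw_eDiff,
        wv_P N mv hN hmv (by omega : mv - 1 ≤ mv), wv_P N mv hN hmv (by omega : (0:ℕ) ≤ mv),
        wv_P N mv hN hmv le_rfl]
      have : (((mv - 1 : ℕ):ℤ) - ((0:ℕ):ℤ)) - (N:ℤ) • ((mv:ℤ) - ((0:ℕ):ℤ)) = -(n' : ℤ) := by
        rw [hn']; simp only [smul_eq_mul]; push_cast [Nat.cast_sub hmv]; ring
      rw [this]
      simp [Int.coe_castAddHom, cast_nself_zero]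
    · have h1 : 1 ≤ b := by omega
      have h2 : b ≤ mv - 1 := by omega
      rw [← colMid N mv hN hmv h1 h2]
      have hco : ((eDiff (Vt N mv) (P N mv hN (b-1)) (P N mv hN 0)
          + eDiff (Vt N mv) (P N mv hN (b+1)) (P N mv hN 0)
          - (2:ℤ) • eDiff (Vt N mv) (P N mv hN b) (P N mv hN 0) : zeroSum (Vt N mv)) : Vt N mv → ℤ)
          = (eDiff (Vt N mv) (P N mv hN (b-1)) (P N mv hN 0) : Vt N mv → ℤ)
            + (eDiff (Vt N mv) (P N mv hN (b+1)) (P N mv hN 0) : Vt N mv → ℤ)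
            - (2:ℤ) • (eDiff (Vt N mv) (P N mv hN b) (P N mv hN 0) : Vt N mv → ℤ) := by
        simp [AddSubgroup.coe_add, AddSubgroup.coe_sub, zs_coe]
      rw [hco, map_sub, map_add, map_zsmul, raw_eDiff, raw_eDiff, raw_eDiff,
        wv_P N mv hN hmv (by omega : b - 1 ≤ mv), wv_P N mv hN hmv (by omega : (0:ℕ) ≤ mv),
        wv_P N mv hN hmv (by omega : b + 1 ≤ mv), wv_P N mv hN hmv hb]
      have : (((b - 1 : ℕ):ℤ) - ((0:ℕ):ℤ)) + (((b + 1 : ℕ):ℤ) - ((0:ℕ):ℤ))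
          - (2:ℤ) • ((b:ℤ) - ((0:ℕ):ℤ)) = 0 := by
        simp only [smul_eq_mul]; push_cast [Nat.cast_sub h1]; ring
      rw [this]
      simp

end ThetaAux

open Multigraph in
/-- `Δ_N(1^m)`: the degree class group of two vertices joined by one path of length `m`
and `N - 1` single edges is cyclic of order `1 + m * (N - 1)`. -/
theorem dcg_theta_one_long_path (N mv : ℕ) (hN : 2 ≤ N) (hmv : 1 ≤ mv) :
    Nonempty ((theta N fun i : Fin N => if i.val = 0 then mv else 1).DCG ≃+
      ZMod (1 + mv * (N - 1))) := by
  classical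
  haveI : NeZero (1 + mv * (N - 1)) := ⟨by omega⟩
  show Nonempty ((ThetaAux.Gg N mv).DCG ≃+ ZMod (1 + mv * (N - 1)))
  set n : ℕ := 1 + mv * (N - 1) with hndef
  have hnZ : (n : ℤ) = 1 + (mv : ℤ) * ((N : ℤ) - 1) := by
    rw [hndef]; push_cast [Nat.cast_sub (by omega : 1 ≤ N)]; ring
  set H : AddSubgroup (zeroSum (ThetaAux.Vt N mv)) :=
    (ThetaAux.Gg N mv).lapLattice.addSubgroupOf (zeroSum (ThetaAux.Vt N mv)) with hH
  set φ : (ThetaAux.Vt N mv → ℤ) →+ ZMod n :=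
    (Int.castAddHom (ZMod n)).comp (ThetaAux.raw N mv) with hφ
  -- φ kills the Laplacian lattice
  have hlat : (ThetaAux.Gg N mv).lapLattice ≤ φ.ker := by
    refine (AddSubgroup.closure_le _).mpr ?_
    rintro x ⟨j, rfl⟩
    have := ThetaAux.phi_col N mv hN hmv n hnZ j
    exact AddMonoidHom.mem_ker.mpr this
  -- the induced map on the quotient
  set ψ : ((zeroSum (ThetaAux.Vt N mv)) ⧸ H) →+ ZMod n :=
    QuotientAddGroup.lift H (φ.comp (zeroSum (ThetaAux.Vt N mv)).subtype)
      (by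
        intro z hz
        have hz' : (z : ThetaAux.Vt N mv → ℤ) ∈ (ThetaAux.Gg N mv).lapLattice :=
          (AddSubgroup.mem_addSubgroupOf).mp hz
        have := hlat hz'
        simpa [AddMonoidHom.mem_ker] using this) with hψ
  set mk : zeroSum (ThetaAux.Vt N mv) →+ (zeroSum (ThetaAux.Vt N mv)) ⧸ H :=
    QuotientAddGroup.mk' H with hmk
  have hmkzero : ∀ x : zeroSum (ThetaAux.Vt N mv),
      (x : ThetaAux.Vt N mv → ℤ) ∈ (ThetaAux.Gg N mv).lapLattice → mk x = 0 := by
    intro x hx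
    rw [hmk, ← AddMonoidHom.mem_ker, QuotientAddGroup.ker_mk']
    exact (AddSubgroup.mem_addSubgroupOf).mpr hx
  set g : (zeroSum (ThetaAux.Vt N mv)) ⧸ H :=
    mk (eDiff (ThetaAux.Vt N mv) (ThetaAux.P N mv hN 1) (ThetaAux.P N mv hN 0)) with hg
  -- the relations
  have relMid : ∀ b : ℕ, 1 ≤ b → b ≤ mv - 1 →
      mk (eDiff (ThetaAux.Vt N mv) (ThetaAux.P N mv hN (b-1)) (ThetaAux.P N mv hN 0))
        + mk (eDiff (ThetaAux.Vt N mv) (ThetaAux.P N mv hN (b+1)) (ThetaAux.P N mv hN 0))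
        - (2:ℤ) • mk (eDiff (ThetaAux.Vt N mv) (ThetaAux.P N mv hN b) (ThetaAux.P N mv hN 0))
        = 0 := by
    intro b h1 h2
    have hmem : ((eDiff (ThetaAux.Vt N mv) (ThetaAux.P N mv hN (b-1)) (ThetaAux.P N mv hN 0)
        + eDiff (ThetaAux.Vt N mv) (ThetaAux.P N mv hN (b+1)) (ThetaAux.P N mv hN 0)
        - (2:ℤ) • eDiff (ThetaAux.Vt N mv) (ThetaAux.P N mv hN b) (ThetaAux.P N mv hN 0)
          : zeroSum (ThetaAux.Vt N mv)) : ThetaAux.Vt N mv → ℤ)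
        ∈ (ThetaAux.Gg N mv).lapLattice := by
      rw [ThetaAux.colMid N mv hN hmv h1 h2]
      exact ThetaAux.colv_mem N mv _
    have := hmkzero _ hmem
    rwa [map_sub, map_add, map_zsmul] at this
  have relB :
      mk (eDiff (ThetaAux.Vt N mv) (ThetaAux.P N mv hN (mv-1)) (ThetaAux.P N mv hN 0))
        - (N:ℤ) • mk (eDiff (ThetaAux.Vt N mv) (ThetaAux.P N mv hN mv) (ThetaAux.P N mv hN 0))
        = 0 := by
    have hmem : ((eDiff (ThetaAux.Vt N mv) (ThetaAux.P N mv hN (mv-1)) (ThetaAux.P N mv hN 0)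
        - (N:ℤ) • eDiff (ThetaAux.Vt N mv) (ThetaAux.P N mv hN mv) (ThetaAux.P N mv hN 0)
          : zeroSum (ThetaAux.Vt N mv)) : ThetaAux.Vt N mv → ℤ)
        ∈ (ThetaAux.Gg N mv).lapLattice := by
      rw [ThetaAux.colB N mv hN hmv]
      exact ThetaAux.colv_mem N mv _
    have := hmkzero _ hmem
    rwa [map_sub, map_zsmul] at this
  -- D a = a • g
  have Dlin : ∀ a : ℕ, a ≤ mv →
      mk (eDiff (ThetaAux.Vt N mv) (ThetaAux.P N mv hN a) (ThetaAux.P N mv hN 0))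
        = (a : ℤ) • g := by
    intro a
    induction a using Nat.strong_induction_on with
    | _ a ih =>
      intro ha
      match a, ih with
      | 0, _ =>
        have h00 : eDiff (ThetaAux.Vt N mv) (ThetaAux.P N mv hN 0) (ThetaAux.P N mv hN 0)
            = 0 := by
          apply Subtype.ext
          funext v
          simp [eDiff]
        rw [h00, map_zero, Nat.cast_zero, zero_zsmul]
      | 1, _ => rw [Nat.cast_one, one_zsmul, hg]
      | (c+2), ih =>
        have h0 := ih c (by omega) (by omega)
        have h1 := ih (c+1) (by omega) (by omega)
        have hrel := relMid (c+1) (by omega) (by omega)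
        rw [show c + 1 - 1 = c from rfl, show c + 1 + 1 = c + 2 from rfl] at hrel
        have hstep : mk (eDiff (ThetaAux.Vt N mv) (ThetaAux.P N mv hN (c+2))
            (ThetaAux.P N mv hN 0))
            = (2:ℤ) • mk (eDiff (ThetaAux.Vt N mv) (ThetaAux.P N mv hN (c+1))
              (ThetaAux.P N mv hN 0))
              - mk (eDiff (ThetaAux.Vt N mv) (ThetaAux.P N mv hN c) (ThetaAux.P N mv hN 0)) := by
          have : mk (eDiff (ThetaAux.Vt N mv) (ThetaAux.P N mv hN (c+2)) (ThetaAux.P N mv hN 0))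
              - ((2:ℤ) • mk (eDiff (ThetaAux.Vt N mv) (ThetaAux.P N mv hN (c+1))
                (ThetaAux.P N mv hN 0))
                - mk (eDiff (ThetaAux.Vt N mv) (ThetaAux.P N mv hN c) (ThetaAux.P N mv hN 0)))
              = 0 := by
            rw [← hrel]; abel
          exact sub_eq_zero.mp this
        rw [hstep, h0, h1, smul_smul, ← sub_smul]
        congr 1
        push_cast
        ring
  -- n • g = 0
  have hng : (n : ℤ) • g = 0 := by
    have h1 := relB
    rw [Dlin (mv-1) (by omega), Dlin mv le_rfl, smul_smul, ← sub_smul] at h1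
    have hsc : (n : ℤ) = -((((mv-1 : ℕ)) : ℤ) - (N : ℤ) * (mv : ℤ)) := by
      rw [hnZ]; push_cast [Nat.cast_sub hmv]; ring
    rw [hsc, neg_smul, h1, neg_zero]
  -- every element is a multiple of g
  have gen : ∀ q : (zeroSum (ThetaAux.Vt N mv)) ⧸ H, ∃ c : ℤ, q = c • g := by
    intro q
    obtain ⟨z, rfl⟩ := QuotientAddGroup.mk'_surjective H q
    have hz : z = ∑ v : ThetaAux.Vt N mv,
        (z : ThetaAux.Vt N mv → ℤ) v • eDiff (ThetaAux.Vt N mv) v (ThetaAux.P N mv hN 0) := by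
      apply Subtype.ext
      have hco : ((∑ v : ThetaAux.Vt N mv,
          (z : ThetaAux.Vt N mv → ℤ) v • eDiff (ThetaAux.Vt N mv) v (ThetaAux.P N mv hN 0)
            : zeroSum (ThetaAux.Vt N mv)) : ThetaAux.Vt N mv → ℤ)
          = ∑ v : ThetaAux.Vt N mv, (z : ThetaAux.Vt N mv → ℤ) v •
              (eDiff (ThetaAux.Vt N mv) v (ThetaAux.P N mv hN 0) : ThetaAux.Vt N mv → ℤ) := by
        rw [← AddSubgroup.coe_subtype, map_sum]
        exact Finset.sum_congr rfl fun v _ => map_zsmul _ _ _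
      rw [hco]
      funext u
      have hz0 : ∑ v, (z : ThetaAux.Vt N mv → ℤ) v = 0 := z.2
      simp only [Finset.sum_apply, Pi.smul_apply, smul_eq_mul]
      show (z : ThetaAux.Vt N mv → ℤ) u = ∑ v : ThetaAux.Vt N mv,
        (z : ThetaAux.Vt N mv → ℤ) v *
          ((if u = v then (1:ℤ) else 0) - (if u = ThetaAux.P N mv hN 0 then 1 else 0))
      rw [Finset.sum_congr rfl (fun v _ => mul_sub ((z : ThetaAux.Vt N mv → ℤ) v) _ _),
        Finset.sum_sub_distrib, ← Finset.sum_mul, hz0, zero_mul, sub_zero]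
      simp [mul_ite, Finset.sum_ite_eq]
    have key : (QuotientAddGroup.mk' H) z
        = (∑ v : ThetaAux.Vt N mv,
            (z : ThetaAux.Vt N mv → ℤ) v * (ThetaAux.Qidx N mv v : ℤ)) • g := by
      conv_lhs => rw [hz]
      rw [map_sum]
      have hterm : ∀ v : ThetaAux.Vt N mv,
          (QuotientAddGroup.mk' H) ((z : ThetaAux.Vt N mv → ℤ) v
            • eDiff (ThetaAux.Vt N mv) v (ThetaAux.P N mv hN 0))
          = ((z : ThetaAux.Vt N mv → ℤ) v * (ThetaAux.Qidx N mv v : ℤ)) • g := by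
        intro v
        rw [map_zsmul]
        have hv : mk (eDiff (ThetaAux.Vt N mv) v (ThetaAux.P N mv hN 0))
            = ((ThetaAux.Qidx N mv v : ℕ) : ℤ) • g := by
          conv_lhs => rw [← ThetaAux.P_Qidx N mv hN hmv v]
          exact Dlin _ (ThetaAux.Qidx_le N mv hmv v)
        rw [show (QuotientAddGroup.mk' H) = mk from rfl]
        rw [hv, smul_smul]
      rw [Finset.sum_congr rfl fun v _ => hterm v, ← Finset.sum_smul]
    exact ⟨_, key⟩
  -- ψ g = 1
  have hψmk : ∀ x : zeroSum (ThetaAux.Vt N mv),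
      ψ (mk x) = φ (x : ThetaAux.Vt N mv → ℤ) := by
    intro x
    rw [hψ, hmk]
    rfl
  have hψg : ψ g = 1 := by
    rw [hg, hψmk, hφ]
    rw [AddMonoidHom.comp_apply, ThetaAux.raw_eDiff,
      ThetaAux.wv_P N mv hN hmv (by omega : (1:ℕ) ≤ mv),
      ThetaAux.wv_P N mv hN hmv (by omega : (0:ℕ) ≤ mv)]
    norm_num
  have hψsmul : ∀ c : ℤ, ψ (c • g) = (c : ZMod n) := by
    intro c
    rw [map_zsmul, hψg, zsmul_eq_mul, mul_one]
  -- bijectivity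
  have hinj : Function.Injective ψ := by
    refine (injective_iff_map_eq_zero ψ).mpr ?_
    intro q hq
    obtain ⟨c, rfl⟩ := gen q
    rw [hψsmul] at hq
    obtain ⟨d, rfl⟩ := (ZMod.intCast_zmod_eq_zero_iff_dvd c n).mp hq
    rw [mul_comm, mul_smul, hng, smul_zero]
  have hsurj : Function.Surjective ψ := by
    intro x
    obtain ⟨c, rfl⟩ := ZMod.intCast_surjective x
    exact ⟨c • g, hψsmul c⟩
  exact ⟨AddEquiv.ofBijective ψ ⟨hinj, hsurj⟩⟩
end

section
/- Let M be a 2×2 integer matrix with entries m_{ij} such that m_{11} > 0, m_{12} ≥ 0, gcd(m_{21}, gcd(m_{11}, m_{12})) = gcd(m_{11}, m_{12}), and gcd(m_{22}, gcd(m_{11}, m_{12})) = 1. Then the cokernel ℤ²/M(ℤ²) of the endomorphism of ℤ² induced by M is a cyclic group. -/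
theorem exists_gcd_one (a b n : ℤ) (hn : n ≠ 0)
    (h : ∀ q : ℕ, q.Prime → (q:ℤ) ∣ a → (q:ℤ) ∣ b → ¬ (q:ℤ) ∣ n) :
    ∃ k : ℤ, Int.gcd (a + b * k) n = 1 := by
  classical
  set K : ℕ := (n.natAbs.primeFactors.filter (fun p => ¬ p ∣ a.natAbs)).prod id with hK
  refine ⟨(K : ℤ), ?_⟩
  by_contra hg
  obtain ⟨q, hq, hqd⟩ := Nat.exists_prime_and_dvd hg
  have h1 : (q:ℤ) ∣ a + b * K :=
    dvd_trans (Int.natCast_dvd_natCast.mpr hqd) (Int.gcd_dvd_left _ _)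
  have h2 : (q:ℤ) ∣ n :=
    dvd_trans (Int.natCast_dvd_natCast.mpr hqd) (Int.gcd_dvd_right _ _)
  have hqp : Prime (q:ℤ) := Nat.prime_iff_prime_int.mp hq
  by_cases ha : q ∣ a.natAbs
  · have haz : (q:ℤ) ∣ a :=
      dvd_trans (Int.natCast_dvd_natCast.mpr ha) (Int.natAbs_dvd.mpr dvd_rfl)
    have hb : ¬ (q:ℤ) ∣ b := fun hb => h q hq haz hb h2
    have hKq : ¬ (q:ℤ) ∣ (K:ℤ) := by
      intro hk
      have hk' : q ∣ K := Int.natCast_dvd_natCast.mp hk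
      obtain ⟨p, hpmem, hpd⟩ := (Prime.dvd_finset_prod_iff hq.prime id).mp hk'
      simp only [Finset.mem_filter, Nat.mem_primeFactors, id] at hpmem hpd
      have : q = p := (Nat.prime_dvd_prime_iff_eq hq hpmem.1.1).mp hpd
      exact hpmem.2 (this ▸ ha)
    have hbk : (q:ℤ) ∣ b * K := by simpa using dvd_sub h1 haz
    rcases hqp.dvd_mul.mp hbk with h' | h'
    · exact hb h'
    · exact hKq h'
  · have hmem : q ∈ n.natAbs.primeFactors.filter (fun p => ¬ p ∣ a.natAbs) := by
      simp only [Finset.mem_filter, Nat.mem_primeFactors]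
      refine ⟨⟨hq, ?_, by simpa using hn⟩, ha⟩
      exact Int.natCast_dvd_natCast.mp (by simpa using (Int.dvd_natAbs.mpr h2))
    have hK' : q ∣ K := Finset.dvd_prod_of_mem id hmem
    have : (q:ℤ) ∣ a := by
      have h3 : (q:ℤ) ∣ b * K := Dvd.dvd.mul_left (Int.natCast_dvd_natCast.mpr hK') b
      simpa using dvd_sub h1 h3
    exact ha (Int.natCast_dvd_natCast.mp (Int.dvd_natAbs.mpr this))

/-- If `M` is a 2×2 integer matrix with `m₁₁ > 0`, `m₁₂ ≥ 0`, `gcd(m₁₁, m₁₂) ∣ m₂₁`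
(expressed via gcds) and `gcd(m₂₂, gcd(m₁₁, m₁₂)) = 1`, then the cokernel of the
endomorphism of `ℤ²` induced by `M` is cyclic. -/
theorem coker_cyclic (M : Matrix (Fin 2) (Fin 2) ℤ)
    (h11 : 0 < M 0 0) (h12 : 0 ≤ M 0 1)
    (h21 : Int.gcd (M 1 0) (Int.gcd (M 0 0) (M 0 1)) = Int.gcd (M 0 0) (M 0 1))
    (h22 : Int.gcd (M 1 1) (Int.gcd (M 0 0) (M 0 1)) = 1) :
    IsAddCyclic ((Fin 2 → ℤ) ⧸ LinearMap.range (Matrix.toLin' M)) := by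
  set d : ℕ := Int.gcd (M 0 0) (M 0 1) with hd
  have hdpos : 0 < d := Int.gcd_pos_of_ne_zero_left _ (ne_of_gt h11)
  have hdz : (d:ℤ) ≠ 0 := by exact_mod_cast hdpos.ne'
  have hdvd00 : (d:ℤ) ∣ M 0 0 := Int.gcd_dvd_left _ _
  have hdvd01 : (d:ℤ) ∣ M 0 1 := Int.gcd_dvd_right _ _
  have hdvd10 : (d:ℤ) ∣ M 1 0 := by
    have h' : (Int.gcd (M 1 0) ((d:ℕ):ℤ) : ℤ) ∣ M 1 0 := Int.gcd_dvd_left _ _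
    rw [hd] at h21 ⊢
    rw [h21] at h'
    exact h'
  obtain ⟨a0, ha0⟩ := hdvd00
  obtain ⟨a1, ha1⟩ := hdvd01
  obtain ⟨n10, hn10⟩ := hdvd10
  set x : ℤ := Int.gcdA (M 0 0) (M 0 1) with hx
  set y : ℤ := Int.gcdB (M 0 0) (M 0 1) with hy
  have hxy : (d:ℤ) = M 0 0 * x + M 0 1 * y := Int.gcd_eq_gcd_ab _ _
  have hxy' : a0 * x + a1 * y = 1 := by
    have : (d:ℤ) * (a0 * x + a1 * y) = (d:ℤ) * 1 := by
      rw [mul_one]; nth_rewrite 2 [hxy]; rw [ha0, ha1]; ring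
    exact mul_left_cancel₀ hdz this
  set t : ℤ := M 1 0 * x + M 1 1 * y with ht
  set D' : ℤ := a0 * M 1 1 - a1 * M 1 0 with hD'
  have hprime : ∀ q : ℕ, q.Prime → (q:ℤ) ∣ t → (q:ℤ) ∣ D' → ¬ (q:ℤ) ∣ (d:ℤ) := by
    intro q hq hqt hqD hqd
    have h10 : (q:ℤ) ∣ M 1 0 := hqd.trans ⟨n10, hn10⟩
    have hm11 : ¬ (q:ℤ) ∣ M 1 1 := by
      intro h'
      have h1 : (q:ℤ) ∣ (Int.gcd (M 1 1) ((d:ℕ):ℤ) : ℤ) := Int.dvd_coe_gcd h' hqd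
      rw [hd] at h22
      rw [h22] at h1
      have h2' : (q:ℤ) ∣ 1 := by exact_mod_cast h1
      have := Int.le_of_dvd one_pos h2'
      have := hq.two_le
      omega
    have hqp : Prime (q:ℤ) := Nat.prime_iff_prime_int.mp hq
    have hqa0 : (q:ℤ) ∣ a0 := by
      have : (q:ℤ) ∣ a0 * M 1 1 := by
        have : a0 * M 1 1 = D' + a1 * M 1 0 := by ring
        rw [this]; exact dvd_add hqD (Dvd.dvd.mul_left h10 a1)
      rcases hqp.dvd_mul.mp this with h' | h'
      · exact h'
      · exact absurd h' hm11
    have hqy : (q:ℤ) ∣ y := by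
      have : (q:ℤ) ∣ y * M 1 1 := by
        have : y * M 1 1 = t - M 1 0 * x := by rw [ht]; ring
        rw [this]; exact dvd_sub hqt (Dvd.dvd.mul_right h10 x)
      rcases hqp.dvd_mul.mp this with h' | h'
      · exact h'
      · exact absurd h' hm11
    have : (q:ℤ) ∣ 1 := by
      rw [← hxy']
      exact dvd_add (Dvd.dvd.mul_right hqa0 x) (Dvd.dvd.mul_left hqy a1)
    have := Int.le_of_dvd one_pos this
    have := hq.two_le
    omega
  obtain ⟨k, hk⟩ := exists_gcd_one t D' (d:ℤ) hdz hprime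
  set τ : ℤ := t + D' * k with hτ
  -- the vector z = (d, τ) lies in the range
  set z : Fin 2 → ℤ := ![(d:ℤ), τ] with hz
  have hzmem : z ∈ LinearMap.range (Matrix.toLin' M) := by
    refine ⟨![x - k * a1, y + k * a0], ?_⟩
    have e0 : M 0 0 * (x - k * a1) + M 0 1 * (y + k * a0) = (d:ℤ) := by
      rw [ha0, ha1]
      have : (d:ℤ) * a0 * (x - k * a1) + (d:ℤ) * a1 * (y + k * a0)
          = (d:ℤ) * (a0 * x + a1 * y) := by ring
      rw [this, hxy', mul_one]
    have e1 : M 1 0 * (x - k * a1) + M 1 1 * (y + k * a0) = τ := by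
      rw [hτ, ht, hD', hn10]
      have hd00 : M 0 0 = (d:ℤ) * a0 := ha0
      ring
    funext i
    fin_cases i <;>
      simp [Matrix.toLin'_apply, Matrix.mulVec, dotProduct, Fin.sum_univ_two, hz] <;>
      [exact e0; exact e1]
  -- Bezout for (d, τ)
  have hgcd : Int.gcd ((d:ℤ)) τ = 1 := by rw [Int.gcd_comm]; exact hk
  set A : ℤ := Int.gcdA ((d:ℤ)) τ with hA
  set B : ℤ := Int.gcdB ((d:ℤ)) τ with hB
  have hone : (1:ℤ) = (d:ℤ) * A + τ * B := by
    have := Int.gcd_eq_gcd_ab ((d:ℤ)) τ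
    rw [hgcd] at this
    exact_mod_cast this
  set v : Fin 2 → ℤ := ![-B, A] with hv
  refine ⟨Submodule.Quotient.mk v, fun w' => ?_⟩
  obtain ⟨w, rfl⟩ := Submodule.Quotient.mk_surjective _ w'
  refine ⟨(d:ℤ) * w 1 - τ * w 0, ?_⟩
  set c1 : ℤ := w 0 * A + w 1 * B with hc1
  set c2 : ℤ := (d:ℤ) * w 1 - τ * w 0 with hc2
  have hw : w = c1 • z + c2 • v := by
    funext i
    fin_cases i <;>
      simp [hz, hv, hc1, hc2, Pi.smul_apply, smul_eq_mul] <;>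
      [linear_combination (w 0) * hone; linear_combination (w 1) * hone]
  show c2 • (Submodule.Quotient.mk v : (Fin 2 → ℤ) ⧸ LinearMap.range (Matrix.toLin' M))
      = Submodule.Quotient.mk w
  rw [hw, Submodule.Quotient.mk_add]
  have h0 : (Submodule.Quotient.mk (c1 • z) : (Fin 2 → ℤ) ⧸ LinearMap.range (Matrix.toLin' M)) = 0 :=
    (Submodule.Quotient.mk_eq_zero _).mpr (Submodule.smul_mem _ _ hzmem)
  rw [h0, zero_add, ← Submodule.Quotient.mk_smul]
end
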